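/- Let S be the semigroup (under composition) of all functions f : ℕ_0 → ℕ_0 for which there is a finite set F ⊆ ℕ (the injective domain) with f mapping F injectively into ℕ and f(n) = 0 for n ∉ F. Let f ∈ S have injective domain F, let F' ⊆ ℕ be finite and disjoint from F, and define g ∈ S with injective domain G ⊇ F ∪ (some set mapped onto F') such that g(n) = n for n ∈ F and g maps ℕ ∩ (G \ F) bijectively onto F'. Then for h ∈ S, we have h ∘ g = f if and only if h(n) = f(n) for all n ∈ F and h(n) = 0 for all n ∈ F'. -/
import Mathlib


/-- Let `S` be the inverse semigroup (under composition) of functions `f : ℕ₀ → ℕ₀` which map a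
finite set `F ⊆ ℕ = {1,2,…}` (the injective domain) injectively into `ℕ` and vanish off `F`.
Let `f ∈ S` have injective domain `F`, let `F' ⊆ ℕ` be finite and disjoint from `F`, and let
`g ∈ S` have injective domain `Fg ⊇ F` with `g n = n` for `n ∈ F` and `g` mapping `Fg \ F`
onto `F'`.  Then for `h ∈ S`: `h ∘ g = f` iff `h = f` on `F` and `h = 0` on `F'`. -/
theorem comp_eq_iff (f g h : ℕ → ℕ) (F F' Fg Fh : Finset ℕ)
    (hF1 : ∀ n ∈ F, 0 < n) (hF2 : Set.InjOn f ↑F) (hF3 : ∀ n ∈ F, 0 < f n)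
    (hF4 : ∀ n, n ∉ F → f n = 0)
    (hF'pos : ∀ n ∈ F', 0 < n) (hdisj : Disjoint F F')
    (hG1 : ∀ n ∈ Fg, 0 < n) (hG2 : Set.InjOn g ↑Fg) (hG3 : ∀ n ∈ Fg, 0 < g n)
    (hG4 : ∀ n, n ∉ Fg → g n = 0)
    (hFsub : F ⊆ Fg) (hgF : ∀ n ∈ F, g n = n) (hgim : g '' ↑(Fg \ F) = ↑F')
    (hH1 : ∀ n ∈ Fh, 0 < n) (hH2 : Set.InjOn h ↑Fh) (hH3 : ∀ n ∈ Fh, 0 < h n)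
    (hH4 : ∀ n, n ∉ Fh → h n = 0) :
    h ∘ g = f ↔ ((∀ n ∈ F, h n = f n) ∧ ∀ n ∈ F', h n = 0) := by
  have h0 : h 0 = 0 := hH4 0 (fun hm => (hH1 0 hm).ne rfl)
  constructor
  · intro heq
    constructor
    · intro n hn
      have := congrFun heq n
      simpa [Function.comp, hgF n hn] using this
    · intro m hm
      have hm' : (m : ℕ) ∈ g '' ↑(Fg \ F) := by rw [hgim]; exact_mod_cast hm
      obtain ⟨n, hn, rfl⟩ := hm'
      have hn' : n ∈ Fg \ F := by exact_mod_cast hn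
      have hnF : n ∉ F := (Finset.mem_sdiff.mp hn').2
      have := congrFun heq n
      simp only [Function.comp] at this
      rw [this, hF4 n hnF]
  · rintro ⟨h1, h2⟩
    funext n
    simp only [Function.comp]
    by_cases hnF : n ∈ F
    · rw [hgF n hnF, h1 n hnF]
    by_cases hnG : n ∈ Fg
    · have : g n ∈ F' := by
        have : g n ∈ g '' ↑(Fg \ F) := ⟨n, by simpa using ⟨hnG, hnF⟩, rfl⟩
        rw [hgim] at this; exact_mod_cast this
      rw [h2 _ this, hF4 n hnF]
    · rw [hG4 n hnG, h0, hF4 n hnF]
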